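/- arXiv:1810.02815 — 2 statements merged into one kernel-verified Lean document; each statement's English description precedes it below -/
import Mathlib

section
/- Equivalence of competitive equilibria and efficient allocations with market-clearing prices: under the market-model assumptions (each W_i differentiable and concave, each K_i nonempty and compact, C_0 differentiable and convex), a tuple ((x_i)_i, q^S, p) with x_i ∈ K_i for all i is a competitive equilibrium (i.e., each x_i maximizes x ↦ W_i(x) − ⟨p, S_i x⟩ over K_i, q^S maximizes q ↦ ⟨p, q⟩ − C_0(q) over ℝ^H, and q^S = Σ_i S_i x_i) if and only if (x_1,…,x_N) maximizes the social welfare (x_1,…,x_N) ↦ Σ_i W_i(x_i) − C_0(Σ_i S_i x_i) over K_1 × ⋯ × K_N, q^S = Σ_i S_i x_i, and p = ∇C_0(q^S). -/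
open scoped RealInnerProductSpace

/-- The aggregation map `S_i`: sums the appliance blocks of a prosumer's consumption
vector, `S_i x = ∑_a x_{·,a}`, giving a vector of per-period totals. -/
noncomputable def aggr {a h' : Type*} [Fintype a] [Fintype h']
    (x : EuclideanSpace ℝ (a × h')) : EuclideanSpace ℝ h' :=
  WithLp.toLp 2 (fun t => ∑ i : a, x (i, t))

/-- The polyhedral constraint set `K = {x : A x ≤ h}` (componentwise inequalities). -/
def Kset {m' n' : Type*} [Fintype m'] [Fintype n'] (A : Matrix m' n' ℝ) (h : m' → ℝ) :
    Set (EuclideanSpace ℝ n') := {x | ∀ l, ∑ j, A l j * x j ≤ h l}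

section Helpers

open Set Filter Topology

/-- The aggregation map as a continuous linear map. -/
noncomputable def aggrCLM (a h' : Type*) [Fintype a] [Fintype h'] :
    EuclideanSpace ℝ (a × h') →L[ℝ] EuclideanSpace ℝ h' :=
  LinearMap.toContinuousLinearMap
    { toFun := fun x => aggr x
      map_add' := fun u v => by
        ext t
        simp [aggr, Finset.sum_add_distrib]
      map_smul' := fun c u => by
        ext t
        simp [aggr, Finset.mul_sum] }

@[simp] lemma aggrCLM_apply {a h' : Type*} [Fintype a] [Fintype h']
    (x : EuclideanSpace ℝ (a × h')) : aggrCLM a h' x = aggr x := rfl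

lemma Kset_convex {m' n' : Type*} [Fintype m'] [Fintype n'] (A : Matrix m' n' ℝ)
    (h : m' → ℝ) : Convex ℝ (Kset A h) := by
  intro u hu v hv a b ha hb hab
  intro l
  have hpt : ∀ j, A l j * (a • u + b • v) j = a * (A l j * u j) + b * (A l j * v j) := by
    intro j
    simp only [PiLp.add_apply, PiLp.smul_apply, smul_eq_mul]
    ring
  calc ∑ j, A l j * (a • u + b • v) j
      = a * ∑ j, A l j * u j + b * ∑ j, A l j * v j := by
        simp only [hpt, Finset.sum_add_distrib, Finset.mul_sum]
    _ ≤ a * h l + b * h l :=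
        add_le_add (mul_le_mul_of_nonneg_left (hu l) ha)
          (mul_le_mul_of_nonneg_left (hv l) hb)
    _ = h l := by rw [← add_mul, hab, one_mul]

lemma slope_deriv_le {φ : ℝ → ℝ} {d c : ℝ} (hφ : HasDerivAt φ d 0)
    (hs : ∀ t : ℝ, t ∈ Set.Ioc (0:ℝ) 1 → (φ t - φ 0) / t ≤ c) : d ≤ c := by
  have h1 : Tendsto (slope φ 0) (𝓝[>] 0) (𝓝 d) :=
    (hasDerivAt_iff_tendsto_slope.mp hφ).mono_left
      (nhdsWithin_mono 0 (fun t ht => ne_of_gt ht))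
  refine le_of_tendsto h1 ?_
  filter_upwards [Ioc_mem_nhdsGT (zero_lt_one)] with t ht
  have : slope φ 0 t = (φ t - φ 0) / t := by
    simp [slope_def_field, div_eq_inv_mul]
  rw [this]
  exact hs t ht

variable {E : Type*} [NormedAddCommGroup E] [NormedSpace ℝ E]

lemma hasDerivAt_along_line {f : E → ℝ} {f' : E →L[ℝ] ℝ} {x y : E}
    (hf : HasFDerivAt f f' x) :
    HasDerivAt (fun t : ℝ => f (x + t • (y - x))) (f' (y - x)) 0 := by
  have hline : HasDerivAt (fun t : ℝ => x + t • (y - x)) (y - x) 0 := by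
    simpa using ((hasDerivAt_id (0:ℝ)).smul_const (y - x)).const_add x
  have hf' : HasFDerivAt f f' ((fun t : ℝ => x + t • (y - x)) 0) := by
    simpa using hf
  exact hf'.comp_hasDerivAt 0 hline

/-- First-order condition: if a differentiable function attains its maximum over a
convex set at `x`, then all directional derivatives into the set are nonpositive. -/
lemma fderiv_dir_nonpos_of_max {f : E → ℝ} {f' : E →L[ℝ] ℝ} {K : Set E}
    (hK : Convex ℝ K) {x y : E} (hx : x ∈ K) (hy : y ∈ K)
    (hf : HasFDerivAt f f' x) (hmax : ∀ z ∈ K, f z ≤ f x) :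
    f' (y - x) ≤ 0 := by
  refine slope_deriv_le (hasDerivAt_along_line hf (y := y)) ?_
  intro t ht
  have hmem : x + t • (y - x) ∈ K := hK.add_smul_sub_mem hx hy ⟨ht.1.le, ht.2⟩
  have hle : f (x + t • (y - x)) ≤ f x := hmax _ hmem
  have h0 : f (x + (0:ℝ) • (y - x)) = f x := by simp
  rw [h0]
  exact div_nonpos_iff.2 (Or.inr ⟨by linarith, ht.1.le⟩)

/-- Tangent line inequality for convex differentiable functions. -/
lemma ConvexOn.tangent_le {f : E → ℝ} (hf : ConvexOn ℝ Set.univ f) {f' : E →L[ℝ] ℝ}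
    {x y : E} (hd : HasFDerivAt f f' x) : f x + f' (y - x) ≤ f y := by
  have key : f' (y - x) ≤ f y - f x := by
    refine slope_deriv_le (hasDerivAt_along_line hd (y := y)) ?_
    intro t ht
    have heq : x + t • (y - x) = (1 - t) • x + t • y := by
      rw [smul_sub, sub_smul, one_smul]; abel
    have hconv := hf.2 (Set.mem_univ x) (Set.mem_univ y)
      (by linarith [ht.2] : (0:ℝ) ≤ 1 - t) ht.1.le (by ring)
    simp only [smul_eq_mul] at hconv
    have h0 : f (x + (0:ℝ) • (y - x)) = f x := by simp
    rw [h0, div_le_iff₀ ht.1, heq]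
    nlinarith
  linarith

/-- Tangent line inequality for concave differentiable functions. -/
lemma ConcaveOn.le_tangent {f : E → ℝ} (hf : ConcaveOn ℝ Set.univ f) {f' : E →L[ℝ] ℝ}
    {x y : E} (hd : HasFDerivAt f f' x) : f y ≤ f x + f' (y - x) := by
  have := hf.neg.tangent_le hd.neg (y := y)
  simp only [Pi.neg_apply, ContinuousLinearMap.neg_apply] at this
  linarith

end Helpers

/-- Equivalence of competitive equilibria and efficient allocations with market-clearing
prices: under the market-model assumptions (each `W i` differentiable and concave, each
polyhedral `K_i = {x : A_i x ≤ h_i}` nonempty and compact, `C0` differentiable and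
convex), a tuple `((x i)_i, q^S, p)` with `x i ∈ K_i` is a competitive equilibrium (each
`x i` maximizes the payoff `y ↦ W_i(y) − ⟨p, S_i y⟩` over `K_i`, `q^S` maximizes the
profit `q ↦ ⟨p, q⟩ − C0(q)` over `ℝ^H`, and `q^S = ∑ i, S_i x_i`) if and only if
`(x i)_i` maximizes the social welfare `y ↦ ∑ i W_i(y_i) − C0(∑ i S_i y_i)` over
`Π i, K_i`, `q^S = ∑ i, S_i x_i`, and `p = ∇C0(q^S)`. -/
theorem competitive_equilibrium_iff_efficient
    (N H : ℕ) (nA : Fin N → ℕ) (m : Fin N → ℕ)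
    (A : ∀ i, Matrix (Fin (m i)) (Fin (nA i) × Fin H) ℝ)
    (h : ∀ i, Fin (m i) → ℝ)
    (W : ∀ i, EuclideanSpace ℝ (Fin (nA i) × Fin H) → ℝ)
    (C0 : EuclideanSpace ℝ (Fin H) → ℝ)
    (hWdiff : ∀ i, Differentiable ℝ (W i))
    (hWconc : ∀ i, ConcaveOn ℝ Set.univ (W i))
    (hKne : ∀ i, (Kset (A i) (h i)).Nonempty)
    (hKcpt : ∀ i, IsCompact (Kset (A i) (h i)))
    (hC0diff : Differentiable ℝ C0)
    (hC0conv : ConvexOn ℝ Set.univ C0)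
    (x : ∀ i, EuclideanSpace ℝ (Fin (nA i) × Fin H))
    (qS p : EuclideanSpace ℝ (Fin H))
    (hx : ∀ i, x i ∈ Kset (A i) (h i)) :
    ((∀ i, ∀ y ∈ Kset (A i) (h i),
        W i y - ⟪p, aggr y⟫ ≤ W i (x i) - ⟪p, aggr (x i)⟫) ∧
      (∀ q : EuclideanSpace ℝ (Fin H), ⟪p, q⟫ - C0 q ≤ ⟪p, qS⟫ - C0 qS) ∧
      qS = ∑ i, aggr (x i)) ↔
    ((∀ y : ∀ i, EuclideanSpace ℝ (Fin (nA i) × Fin H),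
        (∀ i, y i ∈ Kset (A i) (h i)) →
        ∑ i, W i (y i) - C0 (∑ i, aggr (y i)) ≤
          ∑ i, W i (x i) - C0 (∑ i, aggr (x i))) ∧
      qS = ∑ i, aggr (x i) ∧
      p = gradient C0 qS) := by
  have hCgrad : HasFDerivAt C0
      ((InnerProductSpace.toDual ℝ (EuclideanSpace ℝ (Fin H))) (gradient C0 qS)) qS :=
    ((hC0diff qS).hasGradientAt).hasFDerivAt
  constructor
  · rintro ⟨hind, hprof, hmc⟩
    refine ⟨?_, hmc, ?_⟩
    · -- social welfare maximality
      intro y hy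
      have h2 := hprof (∑ i, aggr (y i))
      have hs1 : ⟪p, ∑ i, aggr (y i)⟫ = ∑ i, ⟪p, aggr (y i)⟫ := inner_sum _ _ _
      have hs2 : ⟪p, ∑ i, aggr (x i)⟫ = ∑ i, ⟪p, aggr (x i)⟫ := inner_sum _ _ _
      have hsum : ∑ i, (W i (y i) - ⟪p, aggr (y i)⟫) ≤
          ∑ i, (W i (x i) - ⟪p, aggr (x i)⟫) :=
        Finset.sum_le_sum fun i _ => hind i (y i) (hy i)
      rw [Finset.sum_sub_distrib, Finset.sum_sub_distrib] at hsum
      rw [hmc] at h2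
      linarith
    · -- p = ∇C0(qS)
      have hfd : HasFDerivAt (fun q : EuclideanSpace ℝ (Fin H) => ⟪p, q⟫ - C0 q)
          ((innerSL ℝ p : EuclideanSpace ℝ (Fin H) →L[ℝ] ℝ) -
            (InnerProductSpace.toDual ℝ (EuclideanSpace ℝ (Fin H))) (gradient C0 qS)) qS :=
        (innerSL ℝ p).hasFDerivAt.sub hCgrad
      have key : ∀ v : EuclideanSpace ℝ (Fin H), ⟪p, v⟫ - ⟪gradient C0 qS, v⟫ ≤ 0 := by
        intro v
        have := fderiv_dir_nonpos_of_max (convex_univ) (Set.mem_univ qS)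
          (Set.mem_univ (qS + v)) hfd (fun z _ => hprof z)
        simpa [InnerProductSpace.toDual_apply_apply, add_sub_cancel_left] using this
      have hzero : ⟪p - gradient C0 qS, p - gradient C0 qS⟫ = 0 := by
        have h1 := key (p - gradient C0 qS)
        have h2 := key (-(p - gradient C0 qS))
        rw [inner_neg_right, inner_neg_right] at h2
        rw [inner_sub_left]
        linarith
      rw [inner_self_eq_zero, sub_eq_zero] at hzero
      exact hzero
  · rintro ⟨hwel, hmc, hpg⟩
    refine ⟨?_, ?_, hmc⟩
    · -- individual payoff maximality
      intro i z hz
      classical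
      set r : EuclideanSpace ℝ (Fin H) := ∑ j ∈ Finset.univ.erase i, aggr (x j) with hr
      have hqS' : qS = aggr (x i) + r := by
        rw [hmc, hr]
        exact (Finset.add_sum_erase _ _ (Finset.mem_univ i)).symm
      -- welfare maximality implies x i maximizes w ↦ W i w - C0 (aggr w + r) over K_i
      have hgmax : ∀ w ∈ Kset (A i) (h i),
          W i w - C0 (aggr w + r) ≤ W i (x i) - C0 (aggr (x i) + r) := by
        intro w hw
        have hy : ∀ j, Function.update x i w j ∈ Kset (A j) (h j) := by
          intro j
          rcases eq_or_ne j i with rfl | hj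
          · simpa using hw
          · simpa [Function.update_of_ne hj] using hx j
        have hmain := hwel _ hy
        have hsW : ∑ j, W j (Function.update x i w j) =
            W i w + ∑ j ∈ Finset.univ.erase i, W j (x j) := by
          rw [← Finset.add_sum_erase _ _ (Finset.mem_univ i)]
          congr 1
          · simp
          · exact Finset.sum_congr rfl fun j hj => by
              rw [Function.update_of_ne (Finset.ne_of_mem_erase hj)]
        have hsA : ∑ j, aggr (Function.update x i w j) = aggr w + r := by
          rw [← Finset.add_sum_erase _ _ (Finset.mem_univ i), hr]
          congr 1
          · simp
          · exact Finset.sum_congr rfl fun j hj => by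
              rw [Function.update_of_ne (Finset.ne_of_mem_erase hj)]
        have hsWx : ∑ j, W j (x j) =
            W i (x i) + ∑ j ∈ Finset.univ.erase i, W j (x j) :=
          (Finset.add_sum_erase _ _ (Finset.mem_univ i)).symm
        have hsAx : ∑ j, aggr (x j) = aggr (x i) + r := by
          rw [hr]; exact (Finset.add_sum_erase _ _ (Finset.mem_univ i)).symm
        rw [hsW, hsA, hsWx, hsAx] at hmain
        linarith
      -- first-order condition at x i
      have hC0' : HasFDerivAt C0
          ((InnerProductSpace.toDual ℝ (EuclideanSpace ℝ (Fin H))) (gradient C0 qS))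
          (aggr (x i) + r) := by
        rw [← hqS']; exact hCgrad
      have hWd : HasFDerivAt (W i) (fderiv ℝ (W i) (x i)) (x i) :=
        (hWdiff i (x i)).hasFDerivAt
      have hcompfd : HasFDerivAt
          (fun w : EuclideanSpace ℝ (Fin (nA i) × Fin H) =>
            C0 (aggrCLM (Fin (nA i)) (Fin H) w + r))
          (((InnerProductSpace.toDual ℝ (EuclideanSpace ℝ (Fin H))) (gradient C0 qS)).comp
            (aggrCLM (Fin (nA i)) (Fin H))) (x i) := by
        have hline : HasFDerivAt
            (fun w : EuclideanSpace ℝ (Fin (nA i) × Fin H) =>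
              aggrCLM (Fin (nA i)) (Fin H) w + r)
            (aggrCLM (Fin (nA i)) (Fin H)) (x i) :=
          (aggrCLM (Fin (nA i)) (Fin H)).hasFDerivAt.add_const r
        have hC0'' : HasFDerivAt C0
            ((InnerProductSpace.toDual ℝ (EuclideanSpace ℝ (Fin H))) (gradient C0 qS))
            (aggrCLM (Fin (nA i)) (Fin H) (x i) + r) := by
          simpa using hC0'
        have hc := hC0''.comp (x i) hline
        exact hc
      have hgd : HasFDerivAt
          (fun w : EuclideanSpace ℝ (Fin (nA i) × Fin H) =>
            W i w - C0 (aggrCLM (Fin (nA i)) (Fin H) w + r))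
          (fderiv ℝ (W i) (x i) -
            ((InnerProductSpace.toDual ℝ (EuclideanSpace ℝ (Fin H))) (gradient C0 qS)).comp
              (aggrCLM (Fin (nA i)) (Fin H))) (x i) :=
        hWd.sub hcompfd
      have hfo := fderiv_dir_nonpos_of_max (Kset_convex (A i) (h i)) (hx i) hz hgd
        (fun w hw => by simpa using hgmax w hw)
      simp only [ContinuousLinearMap.coe_sub', Pi.sub_apply,
        ContinuousLinearMap.comp_apply, aggrCLM_apply] at hfo
      -- concave tangent bound for W i
      have htan := (hWconc i).le_tangent hWd (y := z)
      -- translate fderiv of C0 to inner products with p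
      have hsub : aggr (z - x i) = aggr z - aggr (x i) := by
        simpa using map_sub (aggrCLM (Fin (nA i)) (Fin H)) z (x i)
      have hlin : (InnerProductSpace.toDual ℝ (EuclideanSpace ℝ (Fin H)))
          (gradient C0 qS) (aggr (z - x i)) =
          ⟪p, aggr z⟫ - ⟪p, aggr (x i)⟫ := by
        rw [hsub, InnerProductSpace.toDual_apply_apply, ← hpg, inner_sub_right]
      rw [hlin] at hfo
      linarith
    · -- profit maximality
      intro q
      have := hC0conv.tangent_le hCgrad (y := q)
      rw [InnerProductSpace.toDual_apply_apply, inner_sub_right, ← hpg] at this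
      linarith
end

section
/- KKT points of the social-welfare problem yield competitive equilibria: suppose each W_i is differentiable and concave and C_0 is differentiable and convex. Suppose for each i there are x_i ∈ ℝ^{n_i} and λ_i ∈ ℝ^{m_i} satisfying primal feasibility A_i x_i ≤ h_i, dual feasibility λ_i ≥ 0, complementary slackness (λ_i)_l · ((A_i x_i − h_i)_l) = 0 for every row l, and the stationarity condition ∇W_i(x_i) = A_iᵀ λ_i + S_iᵀ p, where p := ∇C_0(Σ_i S_i x_i). Then, setting q^S := Σ_i S_i x_i, each x_i maximizes x ↦ W_i(x) − ⟨p, S_i x⟩ over K_i = {x : A_i x ≤ h_i}, and q^S maximizes q ↦ ⟨p, q⟩ − C_0(q) over ℝ^H; that is, ((x_i)_i, q^S, p) is a competitive equilibrium. -/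
open scoped RealInnerProductSpace

/-- `Aᵀ λ = ∑ l, λ_l a_l` where `a_l` is the `l`-th row of `A`, as a Euclidean vector. -/
noncomputable def transMul {m' n' : Type*} [Fintype m'] [Fintype n']
    (A : Matrix m' n' ℝ) (lam : m' → ℝ) : EuclideanSpace ℝ n' :=
  WithLp.toLp 2 (fun i => ∑ l, lam l * A l i)

/-- The adjoint `S_iᵀ` of the aggregation map applied to a price vector `p`: it replicates
`p` across appliance blocks, `(S_iᵀ p)_{a,t} = p_t`. -/
noncomputable def liftPrice {a h' : Type*} [Fintype a] [Fintype h']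
    (p : EuclideanSpace ℝ h') : EuclideanSpace ℝ (a × h') :=
  WithLp.toLp 2 (fun j : a × h' => p j.2)

open scoped RealInnerProductSpace

lemma convex_first_order {E : Type*} [NormedAddCommGroup E] [InnerProductSpace ℝ E] [CompleteSpace E]
    {f : E → ℝ} (hc : ConvexOn ℝ Set.univ f) {x g : E} (hg : HasGradientAt f g x)
    (y : E) : f x + ⟪g, y - x⟫ ≤ f y := by
  set φ : ℝ → ℝ := fun t => f (x + t • (y - x)) with hφ
  have hcurve : HasDerivAt (fun t : ℝ => x + t • (y - x)) (y - x) 0 := by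
    simpa using ((hasDerivAt_id (0:ℝ)).smul_const (y - x)).const_add x
  have hfd : HasFDerivAt f ((InnerProductSpace.toDual ℝ E) g) x :=
    (hasGradientAt_iff_hasFDerivAt).mp hg
  have hfd0 : HasFDerivAt f ((InnerProductSpace.toDual ℝ E) g) (x + (0:ℝ) • (y - x)) := by
    simpa using hfd
  have hφd : HasDerivAt φ (⟪g, y - x⟫) 0 := by
    have := hfd0.comp_hasDerivAt 0 hcurve
    simp only [InnerProductSpace.toDual_apply_apply] at this
    exact this
  have hφc : ConvexOn ℝ Set.univ φ := by
    have h2 := hc.comp_affineMap (AffineMap.lineMap x y : ℝ →ᵃ[ℝ] E)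
    have heq : φ = f ∘ (AffineMap.lineMap x y : ℝ →ᵃ[ℝ] E) := by
      funext t; simp [hφ, AffineMap.lineMap_apply, add_comm]
    rw [heq]; simpa using h2
  have := hφc.le_slope_of_hasDerivAt (Set.mem_univ 0) (Set.mem_univ 1) zero_lt_one hφd
  have hs : slope φ 0 1 = f y - f x := by
    simp [slope_def_field, hφ]
  rw [hs] at this
  linarith

lemma concave_first_order {E : Type*} [NormedAddCommGroup E] [InnerProductSpace ℝ E] [CompleteSpace E]
    {f : E → ℝ} (hc : ConcaveOn ℝ Set.univ f) {x g : E} (hg : HasGradientAt f g x)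
    (y : E) : f y ≤ f x + ⟪g, y - x⟫ := by
  have hneg : HasGradientAt (fun z => -f z) (-g) x := by
    rw [hasGradientAt_iff_hasFDerivAt] at hg ⊢
    rw [map_neg]; exact hg.neg
  have := convex_first_order hc.neg hneg y
  simp only [inner_neg_left, Pi.neg_apply] at this
  linarith

lemma inner_liftPrice {a h' : Type*} [Fintype a] [Fintype h'] (p : EuclideanSpace ℝ h')
    (z : EuclideanSpace ℝ (a × h')) : ⟪liftPrice p, z⟫ = ⟪p, aggr z⟫ := by
  simp only [liftPrice, aggr, PiLp.inner_apply, RCLike.inner_apply, conj_trivial, WithLp.ofLp_toLp]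
  rw [Fintype.sum_prod_type, Finset.sum_comm]
  simp [Finset.mul_sum, Finset.sum_mul]

lemma aggr_sub {a h' : Type*} [Fintype a] [Fintype h']
    (y x : EuclideanSpace ℝ (a × h')) : aggr (y - x) = aggr y - aggr x := by
  ext t
  simp [aggr, PiLp.sub_apply, Finset.sum_sub_distrib]

lemma inner_transMul {m' n' : Type*} [Fintype m'] [Fintype n'] (A : Matrix m' n' ℝ)
    (lam : m' → ℝ) (z : EuclideanSpace ℝ n') :
    ⟪transMul A lam, z⟫ = ∑ l, lam l * ∑ j, A l j * z j := by
  simp only [transMul, PiLp.inner_apply, RCLike.inner_apply, conj_trivial, Finset.mul_sum, WithLp.ofLp_toLp]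
  rw [Finset.sum_comm]
  refine Finset.sum_congr rfl fun l _ => ?_
  exact Finset.sum_congr rfl fun j _ => by ring

/-- KKT points of the social-welfare problem yield competitive equilibria: if each `W i`
is differentiable and concave, `C0` is differentiable and convex, and for every prosumer
`i` the point `x i` together with the multiplier `lam i` satisfies primal feasibility,
dual feasibility, complementary slackness, and the stationarity condition
`∇W_i(x_i) = A_iᵀ λ_i + S_iᵀ p` where `p = ∇C0(∑ i, S_i x_i)`, then each `x i` maximizes
prosumer `i`'s payoff `y ↦ W_i(y) − ⟨p, S_i y⟩` over `K_i`, and `q^S = ∑ i, S_i x_i`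
maximizes the utility company's profit `q ↦ ⟨p, q⟩ − C0(q)`; i.e. `((x i)_i, q^S, p)` is a
competitive equilibrium. -/
theorem kkt_implies_competitive_equilibrium
    (N H : ℕ) (nA : Fin N → ℕ) (m : Fin N → ℕ)
    (A : ∀ i, Matrix (Fin (m i)) (Fin (nA i) × Fin H) ℝ)
    (h : ∀ i, Fin (m i) → ℝ)
    (W : ∀ i, EuclideanSpace ℝ (Fin (nA i) × Fin H) → ℝ)
    (C0 : EuclideanSpace ℝ (Fin H) → ℝ)
    (hWdiff : ∀ i, Differentiable ℝ (W i))
    (hWconc : ∀ i, ConcaveOn ℝ Set.univ (W i))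
    (hC0diff : Differentiable ℝ C0)
    (hC0conv : ConvexOn ℝ Set.univ C0)
    (x : ∀ i, EuclideanSpace ℝ (Fin (nA i) × Fin H))
    (lam : ∀ i, Fin (m i) → ℝ)
    (qS : EuclideanSpace ℝ (Fin H)) (hqS : qS = ∑ i, aggr (x i))
    (p : EuclideanSpace ℝ (Fin H)) (hp : p = gradient C0 qS)
    (hprimal : ∀ i, x i ∈ Kset (A i) (h i))
    (hdualfeas : ∀ i l, 0 ≤ lam i l)
    (hcs : ∀ i l, lam i l * ((∑ j, A i l j * x i j) - h i l) = 0)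
    (hstat : ∀ i, gradient (W i) (x i) = transMul (A i) (lam i) + liftPrice p) :
    (∀ i, ∀ y ∈ Kset (A i) (h i),
        W i y - ⟪p, aggr y⟫ ≤ W i (x i) - ⟪p, aggr (x i)⟫) ∧
      ∀ q : EuclideanSpace ℝ (Fin H), ⟪p, q⟫ - C0 q ≤ ⟪p, qS⟫ - C0 qS := by
  
  have hpgrad : HasGradientAt C0 p qS := by
    rw [hp]; exact (hC0diff qS).hasGradientAt
  constructor
  · intro i y hy
    have hgW : HasGradientAt (W i) (transMul (A i) (lam i) + liftPrice p) (x i) := by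
      rw [← hstat i]; exact (hWdiff i (x i)).hasGradientAt
    have h1 := concave_first_order (hWconc i) hgW y
    rw [inner_add_left, inner_transMul, inner_liftPrice, aggr_sub, inner_sub_right] at h1
    have hT : ∑ l, lam i l * ∑ j, A i l j * ((y - x i) j) ≤ 0 := by
      have hle : ∀ l ∈ Finset.univ, lam i l * ∑ j, A i l j * ((y - x i) j) ≤ 0 := by
        intro l _
        have hsplit : ∑ j, A i l j * ((y - x i) j)
            = (∑ j, A i l j * y j) - ∑ j, A i l j * x i j := by
          rw [← Finset.sum_sub_distrib]
          refine Finset.sum_congr rfl fun j _ => ?_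
          rw [PiLp.sub_apply]; ring
        have hcs' := hcs i l
        have hyl := hy l
        have hlam := hdualfeas i l
        rw [hsplit, mul_sub]
        nlinarith [mul_le_mul_of_nonneg_left hyl hlam]
      exact Finset.sum_nonpos hle
    linarith
  · intro q
    have h2 := convex_first_order hC0conv hpgrad q
    rw [inner_sub_right] at h2
    linarith
end
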